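/- For every real number x with 0 ≤ x ≤ 1, the inequalities 3x/(2 + √(1 − x²)) ≤ 6(√(1 + x) − √(1 − x))/(4 + √(1 + x) + √(1 − x)) ≤ arcsin x hold. -/

import Mathlib

open Real Set

lemma aux_sin_sub (t : ℝ) (h0 : 0 ≤ t) (h1 : t ≤ π/2) :
    0 ≤ Real.sin t - t * Real.cos t := by
  rcases eq_or_lt_of_le h0 with h | h
  · simp [← h]
  rcases eq_or_lt_of_le h1 with h2 | h2
  · rw [h2]; norm_num [Real.sin_pi_div_two, Real.cos_pi_div_two]
  · have hc : 0 < Real.cos t := Real.cos_pos_of_mem_Ioo ⟨by linarith [Real.pi_pos], h2⟩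
    have ht := Real.lt_tan h h2
    rw [Real.tan_eq_sin_div_cos] at ht
    have := (lt_div_iff₀ hc).mp ht
    linarith

lemma shafer_trig (t : ℝ) (h0 : 0 ≤ t) (h1 : t ≤ π/2) :
    3 * Real.sin t ≤ t * (2 + Real.cos t) := by
  set g : ℝ → ℝ := fun s => 2 - 2 * Real.cos s - s * Real.sin s with hgdef
  have hgd : ∀ s : ℝ, HasDerivAt g (Real.sin s - s * Real.cos s) s := by
    intro s
    have h := ((hasDerivAt_const s (2:ℝ)).sub ((Real.hasDerivAt_cos s).const_mul 2)).sub
      ((hasDerivAt_id s).mul (Real.hasDerivAt_sin s))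
    exact h.congr_deriv (by simp only [id_eq]; ring)
  have hgmono : MonotoneOn g (Icc 0 (π/2)) := by
    apply monotoneOn_of_deriv_nonneg (convex_Icc _ _)
    · exact Continuous.continuousOn (by continuity)
    · intro s _; exact (hgd s).differentiableAt.differentiableWithinAt
    · intro s hs
      rw [interior_Icc] at hs
      rw [(hgd s).deriv]
      exact aux_sin_sub s hs.1.le hs.2.le
  have hg0 : g 0 = 0 := by simp [hgdef]
  have hgnn : ∀ s ∈ Icc 0 (π/2), 0 ≤ g s := by
    intro s hs
    have := hgmono (left_mem_Icc.mpr (by positivity)) hs hs.1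
    rwa [hg0] at this
  set f : ℝ → ℝ := fun s => s * (2 + Real.cos s) - 3 * Real.sin s with hfdef
  have hfd : ∀ s : ℝ, HasDerivAt f (g s) s := by
    intro s
    have h := ((hasDerivAt_id s).mul ((hasDerivAt_const s (2:ℝ)).add
      (Real.hasDerivAt_cos s))).sub ((Real.hasDerivAt_sin s).const_mul 3)
    exact h.congr_deriv (by simp only [hgdef, id_eq, Pi.add_apply]; ring)
  have hfmono : MonotoneOn f (Icc 0 (π/2)) := by
    apply monotoneOn_of_deriv_nonneg (convex_Icc _ _)
    · exact Continuous.continuousOn (by continuity)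
    · intro s _; exact (hfd s).differentiableAt.differentiableWithinAt
    · intro s hs
      rw [interior_Icc] at hs
      rw [(hfd s).deriv]
      exact hgnn s ⟨hs.1.le, hs.2.le⟩
  have hf0 : f 0 = 0 := by simp [hfdef]
  have := hfmono (left_mem_Icc.mpr (by positivity)) ⟨h0, h1⟩ h0
  rw [hf0] at this
  simp only [hfdef] at this
  linarith

theorem shafer_lower_bounds (x : ℝ) (hx : 0 ≤ x) (hx' : x ≤ 1) :
    3 * x / (2 + Real.sqrt (1 - x ^ 2)) ≤
      6 * (Real.sqrt (1 + x) - Real.sqrt (1 - x)) /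
        (4 + Real.sqrt (1 + x) + Real.sqrt (1 - x)) ∧
    6 * (Real.sqrt (1 + x) - Real.sqrt (1 - x)) /
        (4 + Real.sqrt (1 + x) + Real.sqrt (1 - x)) ≤ Real.arcsin x := by
  have hpi := Real.pi_pos
  set θ := Real.arcsin x with hθ
  have hθ0 : 0 ≤ θ := Real.arcsin_nonneg.mpr hx
  have hθ2 : θ ≤ π / 2 := Real.arcsin_le_pi_div_two x
  set t := θ / 2 with ht
  have ht0 : 0 ≤ t := by positivity
  have ht4 : t ≤ π / 4 := by rw [ht]; linarith
  have ht2 : t ≤ π / 2 := by linarith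
  have hsinθ : Real.sin θ = x := Real.sin_arcsin (by linarith) hx'
  have hx2 : x = 2 * Real.sin t * Real.cos t := by
    rw [← hsinθ]
    have : θ = 2 * t := by rw [ht]; ring
    rw [this, Real.sin_two_mul]
  set s := Real.sin t with hs
  set c := Real.cos t with hc
  have hsnn : 0 ≤ s := Real.sin_nonneg_of_nonneg_of_le_pi ht0 (by linarith)
  have hcnn : 0 ≤ c := Real.cos_nonneg_of_mem_Icc ⟨by linarith, ht2⟩
  have hsc : s ^ 2 + c ^ 2 = 1 := Real.sin_sq_add_cos_sq t
  have hslec : s ≤ c := by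
    rw [hc, ← Real.sin_pi_div_two_sub]
    apply Real.sin_le_sin_of_le_of_le_pi_div_two (by linarith) (by linarith) (by linarith)
  -- sqrt identities
  have hsq1 : Real.sqrt (1 + x) = c + s := by
    have h1 : 1 + x = (c + s) ^ 2 := by rw [hx2]; nlinarith
    rw [h1, Real.sqrt_sq (by linarith)]
  have hsq2 : Real.sqrt (1 - x) = c - s := by
    have h1 : 1 - x = (c - s) ^ 2 := by rw [hx2]; nlinarith
    rw [h1, Real.sqrt_sq (by linarith)]
  have hsq3 : Real.sqrt (1 - x ^ 2) = c ^ 2 - s ^ 2 := by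
    have h1 : 1 - x ^ 2 = (c ^ 2 - s ^ 2) ^ 2 := by rw [hx2]; nlinarith
    rw [h1, Real.sqrt_sq (by nlinarith)]
  have hden1 : 0 < 2 + Real.sqrt (1 - x ^ 2) := by
    rw [hsq3]; nlinarith
  have hden2 : 0 < 4 + Real.sqrt (1 + x) + Real.sqrt (1 - x) := by
    rw [hsq1, hsq2]; nlinarith
  have key := shafer_trig t ht0 ht2
  rw [← hs, ← hc] at key
  have hθt : θ = 2 * t := by rw [ht]; ring
  clear_value s c t θ
  constructor
  · rw [div_le_div_iff₀ hden1 hden2, hsq1, hsq2, hsq3, hx2]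
    have key2 : 6 * ((c + s) - (c - s)) * (2 + (c ^ 2 - s ^ 2)) -
        3 * (2 * s * c) * (4 + (c + s) + (c - s)) = 12 * (s * (c - 1) ^ 2) := by
      linear_combination (-12 * s) * hsc
    linarith [mul_nonneg hsnn (sq_nonneg (c - 1)), key2]
  · rw [div_le_iff₀ hden2, hsq1, hsq2, hθt]
    linarith [key]
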